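/- The Gaussian function p(x,t) = (1/(σ(t)√(2π))) · exp(−(x−m(t))²/(2σ(t)²)) satisfies the replicator-mutator equation ∂p/∂t = (a + c·x − φ(t))·p + μ·∂²p/∂x², where φ(t) = ∫ (a + c·x)·p(x,t) dx = a + c·m(t), if and only if the parameters satisfy m'(t) = c·σ(t)² and σ'(t) = μ/σ(t) (assuming σ(t) > 0 and σ differentiable). -/

import Mathlib

open Real MeasureTheory

/-- The Gaussian ansatz solves the replicator-mutator equation with linear fitness
iff the mean and standard deviation obey m' = c σ², σ' = μ/σ. -/
theorem stmt_0 (a c μ : ℝ) (hμ : 0 < μ)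
    (m σ : ℝ → ℝ) (hm : Differentiable ℝ m) (hσ : Differentiable ℝ σ)
    (hσpos : ∀ t, 0 < σ t)
    (p : ℝ → ℝ → ℝ)
    (hp : ∀ x t, p x t =
      (1 / (σ t * Real.sqrt (2 * Real.pi))) * Real.exp (-(x - m t)^2 / (2 * (σ t)^2)))
    (φ : ℝ → ℝ)
    (hφ : ∀ t, φ t = a + c * m t) :
    (∀ x t, deriv (fun τ => p x τ) t
        = (a + c * x - φ t) * p x t + μ * deriv (deriv (fun ξ => p ξ t)) x)
      ↔ (∀ t, deriv m t = c * (σ t)^2 ∧ deriv σ t = μ / σ t) := by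
  have hsqrt : 0 < Real.sqrt (2 * Real.pi) := Real.sqrt_pos.mpr (by positivity)
  have hps : ∀ x t, 0 < p x t := by
    intro x t
    rw [hp]
    have := hσpos t
    positivity
  -- first x-derivative
  have hderivx : ∀ t x, HasDerivAt (fun ξ => p ξ t)
      (p x t * (-(x - m t) / (σ t)^2)) x := by
    intro t x
    have hs := hσpos t
    have h1 : HasDerivAt (fun ξ : ℝ => -(ξ - m t)^2 / (2 * (σ t)^2))
        (-(x - m t) / (σ t)^2) x := by
      have h0 : HasDerivAt (fun ξ : ℝ => -(ξ - m t)^2 / (2 * (σ t)^2))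
          ((-(2 * (x - m t)^1 * 1)) / (2 * (σ t)^2)) x := by
        apply HasDerivAt.div_const
        exact (((hasDerivAt_id x).sub_const (m t)).pow 2).neg
      convert h0 using 1
      field_simp
    have h2 := (h1.exp).const_mul (1 / (σ t * Real.sqrt (2 * Real.pi)))
    have heq : (fun ξ => p ξ t)
        = fun ξ => (1 / (σ t * Real.sqrt (2 * Real.pi)))
            * Real.exp (-(ξ - m t)^2 / (2 * (σ t)^2)) := funext fun ξ => hp ξ t
    rw [heq]
    refine h2.congr_deriv ?_
    rw [hp]
    ring
  have hdx : ∀ t, deriv (fun ξ => p ξ t)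
      = fun x => p x t * (-(x - m t) / (σ t)^2) :=
    fun t => funext fun x => (hderivx t x).deriv
  -- second x-derivative
  have hderivxx : ∀ t x, deriv (deriv (fun ξ => p ξ t)) x
      = p x t * ((x - m t)^2 / (σ t)^4 - 1 / (σ t)^2) := by
    intro t x
    rw [hdx t]
    have hs := hσpos t
    have hb : HasDerivAt (fun ξ : ℝ => -(ξ - m t) / (σ t)^2) (-1 / (σ t)^2) x := by
      have := (((hasDerivAt_id x).sub_const (m t)).neg).div_const ((σ t)^2)
      simpa using this
    have h1 := (hderivx t x).fun_mul hb
    rw [h1.deriv]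
    field_simp
    ring
  -- t-derivative
  have hderivt : ∀ x t, deriv (fun τ => p x τ) t
      = p x t * (-(deriv σ t) / (σ t)
          + (x - m t) * (deriv m t) / (σ t)^2
          + (x - m t)^2 * (deriv σ t) / (σ t)^3) := by
    intro x t
    have hs := hσpos t
    have hσd : HasDerivAt σ (deriv σ t) t := (hσ t).hasDerivAt
    have hmd : HasDerivAt m (deriv m t) t := (hm t).hasDerivAt
    -- derivative of the prefactor
    have hu : HasDerivAt (fun τ => 1 / (σ τ * Real.sqrt (2 * Real.pi)))
        (-(deriv σ t * Real.sqrt (2 * Real.pi))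
          / (σ t * Real.sqrt (2 * Real.pi))^2) t := by
      have h0 : HasDerivAt (fun τ => σ τ * Real.sqrt (2 * Real.pi))
          (deriv σ t * Real.sqrt (2 * Real.pi)) t := hσd.mul_const _
      have := h0.fun_inv (by positivity)
      simpa [one_div] using this
    -- derivative of the exponent
    have hnum : HasDerivAt (fun τ => -(x - m τ)^2)
        (-(2 * (x - m t)^1 * (0 - deriv m t))) t :=
      (((hasDerivAt_const t x).sub hmd).pow 2).neg
    have hden : HasDerivAt (fun τ => 2 * (σ τ)^2)
        (2 * (2 * (σ t)^1 * deriv σ t)) t := by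
      exact ((hσd.pow 2).const_mul 2)
    have hh : HasDerivAt (fun τ => -(x - m τ)^2 / (2 * (σ τ)^2))
        (((-(2 * (x - m t)^1 * (0 - deriv m t))) * (2 * (σ t)^2)
          - (-(x - m t)^2) * (2 * (2 * (σ t)^1 * deriv σ t)))
            / (2 * (σ t)^2)^2) t :=
      hnum.div hden (by positivity)
    have hv := hh.exp
    have hprod := hu.fun_mul hv
    have heq : (fun τ => p x τ)
        = fun τ => (1 / (σ τ * Real.sqrt (2 * Real.pi)))
            * Real.exp (-(x - m τ)^2 / (2 * (σ τ)^2)) := funext fun τ => hp x τ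
    rw [heq, hprod.deriv, hp]
    field_simp
    ring
  constructor
  · intro H t
    have hs := hσpos t
    have key : ∀ x : ℝ,
        -(deriv σ t) / (σ t) + (x - m t) * (deriv m t) / (σ t)^2
          + (x - m t)^2 * (deriv σ t) / (σ t)^3
        = c * (x - m t) + μ * ((x - m t)^2 / (σ t)^4 - 1 / (σ t)^2) := by
      intro x
      have eq := H x t
      rw [hderivt, hderivxx, hφ] at eq
      exact mul_left_cancel₀ (hps x t).ne' (by linear_combination eq)
    have key0 := key (m t)
    have key1 := key (m t + σ t)
    simp only [sub_self, add_sub_cancel_left] at key0 key1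
    constructor
    · -- deriv m t = c * (σ t)^2
      have h2 : deriv m t * σ t ^ 11 = c * σ t ^ 13 := by
        field_simp at key1
        linear_combination σ t ^ 10 * key1
      have h3 : deriv m t * σ t ^ 11 = (c * σ t ^ 2) * σ t ^ 11 := by
        linear_combination h2
      exact mul_right_cancel₀ (pow_ne_zero 11 hs.ne') h3
    · -- deriv σ t = μ / σ t
      have h2 : deriv σ t * σ t = μ := by
        field_simp at key0
        have h3 : (deriv σ t * σ t) * σ t = μ * σ t := mul_right_cancel₀ hs.ne' (by linear_combination -key0)
        exact mul_right_cancel₀ hs.ne' h3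
      rw [eq_div_iff hs.ne']
      linarith
  · intro H x t
    obtain ⟨hm', hσ'⟩ := H t
    have hs := hσpos t
    rw [hderivt, hderivxx, hφ, hm', hσ']
    field_simp
    ring
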